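/- Let T > 0, γ > 0, ζ ∈ ℝ, and define θ0(s) := (1 + ζ·exp(2γ(T−s)))/(1 − ζ·exp(2γ(T−s))) and Ψ0(t,s) := exp(−2γ(s−t))·((ζ·exp(2γT) − exp(2γs))/(ζ·exp(2γT) − exp(2γt)))². Fix t ≤ T and assume ζ·exp(2γT) ≠ exp(2γs) for every s ∈ [t,T]. Then ∫_t^T s·θ0(s)·Ψ0(t,s) ds = [ exp(4γt)·(1−2γt) − ζ²(2γt+1)·exp(4γT) + exp(2γ(t+T))·(ζ² + 2γ(ζ²+1)T − 1) ] / (4γ²·(exp(2γt) − ζ·exp(2γT))²). -/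

import Mathlib

open Real Set MeasureTheory

lemma aux_deriv (γ a : ℝ) (hγ : γ ≠ 0) (s : ℝ) :
    HasDerivAt (fun x : ℝ => (x / (2*γ) - 1/(4*γ^2)) * Real.exp (2*γ*x)
        + a^2 * ((x / (2*γ) + 1/(4*γ^2)) * Real.exp (-(2*γ*x))))
      (s * Real.exp (2*γ*s) - a^2 * (s * Real.exp (-(2*γ*s)))) s := by
  have hexp : HasDerivAt (fun x : ℝ => Real.exp (2*γ*x)) (Real.exp (2*γ*s) * (2*γ)) s := by
    simpa using ((hasDerivAt_id s).const_mul (2*γ)).exp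
  have hexp' : HasDerivAt (fun x : ℝ => Real.exp (-(2*γ*x))) (Real.exp (-(2*γ*s)) * (-(2*γ))) s := by
    simpa using (((hasDerivAt_id s).const_mul (2*γ)).neg).exp
  have h1 : HasDerivAt (fun x : ℝ => (x / (2*γ) - 1/(4*γ^2)) * Real.exp (2*γ*x))
      ((1/(2*γ)) * Real.exp (2*γ*s) + (s/(2*γ) - 1/(4*γ^2)) * (Real.exp (2*γ*s) * (2*γ))) s := by
    have := (((hasDerivAt_id s).div_const (2*γ)).sub_const (1/(4*γ^2))).fun_mul hexp
    simpa using this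
  have h2 : HasDerivAt (fun x : ℝ => (x / (2*γ) + 1/(4*γ^2)) * Real.exp (-(2*γ*x)))
      ((1/(2*γ)) * Real.exp (-(2*γ*s)) + (s/(2*γ) + 1/(4*γ^2)) * (Real.exp (-(2*γ*s)) * (-(2*γ)))) s := by
    have := (((hasDerivAt_id s).div_const (2*γ)).add_const (1/(4*γ^2))).fun_mul hexp'
    simpa using this
  have := h1.fun_add (h2.const_mul (a^2))
  refine this.congr_deriv ?_
  field_simp
  ring

theorem stmt_9 (T γ ζ : ℝ) (hT : 0 < T) (hγ : 0 < γ)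
    (θ0 : ℝ → ℝ)
    (hθ0 : ∀ s, θ0 s = (1 + ζ * Real.exp (2 * γ * (T - s))) /
                       (1 - ζ * Real.exp (2 * γ * (T - s))))
    (Ψ0 : ℝ → ℝ → ℝ)
    (hΨ0 : ∀ t s, Ψ0 t s = Real.exp (-2 * γ * (s - t)) *
        ((ζ * Real.exp (2 * γ * T) - Real.exp (2 * γ * s)) /
         (ζ * Real.exp (2 * γ * T) - Real.exp (2 * γ * t))) ^ 2)
    (t : ℝ) (htT : t ≤ T)
    (hnd : ∀ s ∈ Set.Icc t T, ζ * Real.exp (2 * γ * T) ≠ Real.exp (2 * γ * s)) :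
    ∫ s in t..T, s * θ0 s * Ψ0 t s =
      (Real.exp (4 * γ * t) * (1 - 2 * γ * t)
        - ζ ^ 2 * (2 * γ * t + 1) * Real.exp (4 * γ * T)
        + Real.exp (2 * γ * (t + T)) * (ζ ^ 2 + 2 * γ * (ζ ^ 2 + 1) * T - 1)) /
      (4 * γ ^ 2 * (Real.exp (2 * γ * t) - ζ * Real.exp (2 * γ * T)) ^ 2) := by
  have hγ' : γ ≠ 0 := ne_of_gt hγ
  set a : ℝ := ζ * Real.exp (2 * γ * T) with ha
  have hct : a - Real.exp (2 * γ * t) ≠ 0 :=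
    sub_ne_zero_of_ne (hnd t ⟨le_refl t, htT⟩)
  set K : ℝ := Real.exp (2 * γ * t) / (a - Real.exp (2 * γ * t))^2 with hK
  set h : ℝ → ℝ := fun s => K * (s * Real.exp (2*γ*s) - a^2 * (s * Real.exp (-(2*γ*s)))) with hh
  have step1 : ∫ s in t..T, s * θ0 s * Ψ0 t s = ∫ s in t..T, h s := by
    apply intervalIntegral.integral_congr
    intro s hs
    rw [Set.uIcc_of_le htT] at hs
    have hu : Real.exp (2*γ*s) ≠ 0 := (Real.exp_pos _).ne'
    have hs1 : Real.exp (2*γ*s) - a ≠ 0 := sub_ne_zero_of_ne (hnd s hs).symm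
    simp only [hθ0, hΨ0, hh, hK]
    have e1 : Real.exp (2*γ*(T-s)) = Real.exp (2*γ*T) / Real.exp (2*γ*s) := by
      rw [eq_div_iff hu, ← Real.exp_add]; ring_nf
    have e2 : Real.exp (-2*γ*(s-t)) = Real.exp (2*γ*t) / Real.exp (2*γ*s) := by
      rw [eq_div_iff hu, ← Real.exp_add]; ring_nf
    have e3 : Real.exp (-(2*γ*s)) = 1 / Real.exp (2*γ*s) := by
      rw [Real.exp_neg, one_div]
    have hd : 1 - ζ * Real.exp (2*γ*(T-s)) ≠ 0 := by
      rw [e1]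
      have : 1 - ζ * (Real.exp (2*γ*T) / Real.exp (2*γ*s))
          = (Real.exp (2*γ*s) - a) / Real.exp (2*γ*s) := by
        rw [ha]; field_simp
      rw [this]
      exact div_ne_zero hs1 hu
    rw [e1, e2, e3] at *
    rw [ha] at *
    field_simp at hd hs1 hct ⊢
    ring_nf
  rw [step1]
  set F : ℝ → ℝ := fun x => K * ((x / (2*γ) - 1/(4*γ^2)) * Real.exp (2*γ*x)
        + a^2 * ((x / (2*γ) + 1/(4*γ^2)) * Real.exp (-(2*γ*x)))) with hF
  have step2 : ∫ s in t..T, h s = F T - F t := by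
    apply intervalIntegral.integral_eq_sub_of_hasDerivAt
    · intro s _
      exact (aux_deriv γ a hγ' s).const_mul K
    · apply Continuous.intervalIntegrable
      fun_prop
  rw [step2, hF, hK, ha]
  have E1 : Real.exp (4*γ*t) = Real.exp (2*γ*t) * Real.exp (2*γ*t) := by
    rw [← Real.exp_add]; ring_nf
  have E2 : Real.exp (4*γ*T) = Real.exp (2*γ*T) * Real.exp (2*γ*T) := by
    rw [← Real.exp_add]; ring_nf
  have E3 : Real.exp (2*γ*(t+T)) = Real.exp (2*γ*t) * Real.exp (2*γ*T) := by
    rw [← Real.exp_add]; ring_nf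
  have E4 : Real.exp (-(2*γ*T)) = 1 / Real.exp (2*γ*T) := by rw [Real.exp_neg, one_div]
  have E5 : Real.exp (-(2*γ*t)) = 1 / Real.exp (2*γ*t) := by rw [Real.exp_neg, one_div]
  have huT : Real.exp (2*γ*T) ≠ 0 := (Real.exp_pos _).ne'
  have hut : Real.exp (2*γ*t) ≠ 0 := (Real.exp_pos _).ne'
  simp only []
  rw [E1, E2, E3, E4, E5]
  rw [ha] at hct
  have hct2 : Real.exp (2*γ*t) - ζ * Real.exp (2*γ*T) ≠ 0 :=
    sub_ne_zero_of_ne (sub_ne_zero.mp hct).symm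
  field_simp [hct2]
  ring
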